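/- For k₁, k₂ ≥ 0 let V^{k₁}, V^{k₂} be classical solutions of the auxiliary HJB equation with Neumann boundary conditions on [0, z̄], each satisfying 0 ≤ V^{k_i} ≤ z̄^α/(ρ B^{α-1}), 0 ≤ (V^{k_i})' ≤ M with M = [z̄^α/((1-γ)B^{α-1})]^{1-γ}(w/γ)^γ, and ‖V^{k₁} - V^{k₂}‖_∞ ≤ (M/ρ)|k₁-k₂|. Then ‖(V^{k₁})' - (V^{k₂})'‖_∞ ≤ (4 z̄ / σ²) M |k₁ - k₂|. -/

import Mathlib

open Set MeasureTheory intervalIntegral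

private lemma aux_key (zb σ ρ w B α γ k₁ k₂ : ℝ)
    (hz : 0 < zb) (hσ : 0 < σ) (hρ : 0 < ρ) (hw : 0 < w)
    (hγ : γ ∈ Set.Ioo (0:ℝ) 1) (hk₁ : 0 ≤ k₁)
    (V₁ V₂ : ℝ → ℝ)
    (hV₁ : DifferentiableOn ℝ V₁ (Set.Icc 0 zb))
    (hV₁' : ContinuousOn (deriv V₁) (Set.Icc 0 zb))
    (hV₁'' : ∀ z ∈ Set.Ioo 0 zb, DifferentiableAt ℝ (deriv V₁) z)
    (hV₂ : DifferentiableOn ℝ V₂ (Set.Icc 0 zb))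
    (hV₂' : ContinuousOn (deriv V₂) (Set.Icc 0 zb))
    (hV₂'' : ∀ z ∈ Set.Ioo 0 zb, DifferentiableAt ℝ (deriv V₂) z)
    (heq₁ : ∀ z ∈ Set.Ioo 0 zb,
      -(σ^2/2) * deriv (deriv V₁) z + ρ * V₁ z -
        ((1-γ) * (γ/w) ^ (γ/(1-γ)) * (max 0 (deriv V₁ z)) ^ (1/(1-γ))
          + k₁ * deriv V₁ z + z ^ α / B ^ (α-1)) = 0)
    (heq₂ : ∀ z ∈ Set.Ioo 0 zb,
      -(σ^2/2) * deriv (deriv V₂) z + ρ * V₂ z -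
        ((1-γ) * (γ/w) ^ (γ/(1-γ)) * (max 0 (deriv V₂ z)) ^ (1/(1-γ))
          + k₂ * deriv V₂ z + z ^ α / B ^ (α-1)) = 0)
    (hbc0 : deriv V₁ 0 - deriv V₂ 0 = 0)
    (hbc1 : deriv V₁ zb - deriv V₂ zb = 0)
    (M : ℝ) (hM0 : 0 ≤ M)
    (hgrad₂ : ∀ z ∈ Set.Icc 0 zb, 0 ≤ deriv V₂ z ∧ deriv V₂ z ≤ M)
    (hdist : ∀ z ∈ Set.Icc 0 zb, |V₁ z - V₂ z| ≤ M / ρ * |k₁ - k₂|) :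
    ∀ z ∈ Set.Icc 0 zb, deriv V₁ z - deriv V₂ z ≤ 4 * zb / σ^2 * M * |k₁ - k₂| := by
  have h1γ : 0 < 1 - γ := by linarith [hγ.2]
  have hp : (0:ℝ) ≤ 1/(1-γ) := by positivity
  have hσ2 : (0:ℝ) < σ^2 := by positivity
  have hRHS : 0 ≤ 4 * zb / σ^2 * M * |k₁ - k₂| := by positivity
  -- the continuous function g which equals (σ²/2) u'' on (0, zb)
  set g : ℝ → ℝ := fun x => ρ * (V₁ x - V₂ x)
      - (1-γ) * (γ/w) ^ (γ/(1-γ)) * ((max 0 (deriv V₁ x)) ^ (1/(1-γ))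
          - (max 0 (deriv V₂ x)) ^ (1/(1-γ)))
      - k₁ * (deriv V₁ x - deriv V₂ x) - (k₁ - k₂) * deriv V₂ x with hg
  have hA₁c : ContinuousOn (fun x => (max 0 (deriv V₁ x)) ^ (1/(1-γ))) (Set.Icc 0 zb) :=
    (continuousOn_const.sup hV₁').rpow_const (fun x _ => Or.inr hp)
  have hA₂c : ContinuousOn (fun x => (max 0 (deriv V₂ x)) ^ (1/(1-γ))) (Set.Icc 0 zb) :=
    (continuousOn_const.sup hV₂').rpow_const (fun x _ => Or.inr hp)
  have hgc : ContinuousOn g (Set.Icc 0 zb) := by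
    apply ContinuousOn.sub
    apply ContinuousOn.sub
    apply ContinuousOn.sub
    · exact continuousOn_const.mul (hV₁.continuousOn.sub hV₂.continuousOn)
    · exact continuousOn_const.mul (hA₁c.sub hA₂c)
    · exact continuousOn_const.mul (hV₁'.sub hV₂')
    · exact continuousOn_const.mul hV₂'
  have hderiv : ∀ x ∈ Set.Ioo 0 zb,
      HasDerivAt (fun y => σ^2/2 * (deriv V₁ y - deriv V₂ y)) (g x) x := by
    intro x hx
    have h1 := ((hV₁'' x hx).hasDerivAt.sub (hV₂'' x hx).hasDerivAt).const_mul (σ^2/2)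
    refine h1.congr_deriv ?_
    have e1 := heq₁ x hx
    have e2 := heq₂ x hx
    rw [hg]
    linear_combination e2 - e1
  -- maximum point of u'
  have hu'c : ContinuousOn (fun x => deriv V₁ x - deriv V₂ x) (Set.Icc 0 zb) := hV₁'.sub hV₂'
  obtain ⟨zs, hzs, hmax⟩ := isCompact_Icc.exists_isMaxOn (nonempty_Icc.mpr hz.le) hu'c
  suffices h : deriv V₁ zs - deriv V₂ zs ≤ 4 * zb / σ^2 * M * |k₁ - k₂| by
    intro z hzm
    exact le_trans (hmax hzm) h
  by_cases hm : deriv V₁ zs - deriv V₂ zs ≤ 0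
  · linarith
  push_neg at hm
  -- zs is interior
  have hzs0 : zs ≠ 0 := by intro h; rw [h] at hm; linarith [hbc0]
  have hzsb : zs ≠ zb := by intro h; rw [h] at hm; linarith [hbc1]
  have hzsI : zs ∈ Set.Ioo 0 zb := ⟨lt_of_le_of_ne hzs.1 (Ne.symm hzs0), lt_of_le_of_ne hzs.2 hzsb⟩
  -- last zero of u' before zs
  set S : Set ℝ := Set.Icc 0 zs ∩ (fun x => deriv V₁ x - deriv V₂ x) ⁻¹' {0} with hSdef
  have hS0 : (0:ℝ) ∈ S := ⟨⟨le_refl 0, hzs.1⟩, by simpa using hbc0⟩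
  have hSsub : S ⊆ Set.Icc 0 zs := Set.inter_subset_left
  have hSclosed : IsClosed S :=
    ContinuousOn.preimage_isClosed_of_isClosed
      (hu'c.mono (Set.Icc_subset_Icc_right hzs.2)) isClosed_Icc isClosed_singleton
  have hScpt : IsCompact S := isCompact_Icc.of_isClosed_subset hSclosed hSsub
  have hζS : sSup S ∈ S := hScpt.sSup_mem ⟨0, hS0⟩
  set ζ := sSup S with hζdef
  have hζ0 : 0 ≤ ζ := (hSsub hζS).1
  have hζzs : ζ ≤ zs := (hSsub hζS).2
  have hζu : deriv V₁ ζ - deriv V₂ ζ = 0 := by simpa using hζS.2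
  have hζlt : ζ < zs := lt_of_le_of_ne hζzs (by intro h; rw [h] at hζu; linarith)
  have hsub : Set.Icc ζ zs ⊆ Set.Icc 0 zb := Set.Icc_subset_Icc hζ0 hzs.2
  -- u' > 0 on (ζ, zs]
  have hpos : ∀ y ∈ Set.Ioc ζ zs, 0 < deriv V₁ y - deriv V₂ y := by
    intro y hy
    by_contra hcon
    push_neg at hcon
    have hylt : y < zs := lt_of_le_of_ne hy.2 (by intro h; rw [h] at hcon; linarith)
    have hy0 : 0 ≤ y := le_trans hζ0 hy.1.le
    have hivt := intermediate_value_Icc hylt.le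
      (hu'c.mono (Set.Icc_subset_Icc hy0 hzs.2))
    have h0mem : (0:ℝ) ∈ Set.Icc (deriv V₁ y - deriv V₂ y) (deriv V₁ zs - deriv V₂ zs) :=
      ⟨hcon, hm.le⟩
    obtain ⟨x, hxmem, hx0⟩ := hivt h0mem
    have hxS : x ∈ S := ⟨⟨le_trans hy0 hxmem.1, hxmem.2⟩, by simpa using hx0⟩
    have hxle : x ≤ ζ := le_csSup hScpt.bddAbove hxS
    linarith [hy.1, hxmem.1]
  have hnonneg : ∀ y ∈ Set.Icc ζ zs, 0 ≤ deriv V₁ y - deriv V₂ y := by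
    intro y hy
    rcases eq_or_lt_of_le hy.1 with h | h
    · rw [← h]; linarith
    · exact (hpos y ⟨h, hy.2⟩).le
  -- FTC
  have hgint : IntervalIntegrable g volume ζ zs :=
    (hgc.mono hsub).intervalIntegrable_of_Icc hζlt.le
  have hFTC : ∫ y in ζ..zs, g y
      = σ^2/2 * (deriv V₁ zs - deriv V₂ zs) - σ^2/2 * (deriv V₁ ζ - deriv V₂ ζ) :=
    integral_eq_sub_of_hasDeriv_right_of_le hζlt.le
      ((continuousOn_const.mul (hV₁'.sub hV₂')).mono hsub)
      (fun x hx => (hderiv x (Set.Ioo_subset_Ioo hζ0 hzs.2 hx)).hasDerivWithinAt)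
      hgint
  -- pointwise bound on g
  have hptw : ∀ x ∈ Set.Icc ζ zs, g x ≤ 2 * M * |k₁ - k₂| := by
    intro x hx
    have hx' : x ∈ Set.Icc 0 zb := hsub hx
    have hd := hdist x hx'
    have hg2 := hgrad₂ x hx'
    have hu := hnonneg x hx
    have hAmono : (max 0 (deriv V₂ x)) ^ (1/(1-γ)) ≤ (max 0 (deriv V₁ x)) ^ (1/(1-γ)) :=
      Real.rpow_le_rpow (le_max_left 0 _) (max_le_max le_rfl (by linarith)) hp
    have hc : (0:ℝ) ≤ (γ/w) ^ (γ/(1-γ)) := Real.rpow_nonneg (div_nonneg hγ.1.le hw.le) _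
    have h1 : ρ * (V₁ x - V₂ x) ≤ M * |k₁ - k₂| := by
      have h1' : V₁ x - V₂ x ≤ M/ρ * |k₁-k₂| := (abs_le.mp hd).2
      have := mul_le_mul_of_nonneg_left h1' hρ.le
      calc ρ * (V₁ x - V₂ x) ≤ ρ * (M/ρ * |k₁-k₂|) := this
        _ = M * |k₁ - k₂| := by field_simp
    have h4 : -((k₁ - k₂) * deriv V₂ x) ≤ M * |k₁ - k₂| := by
      have habs : |(k₁-k₂) * deriv V₂ x| ≤ |k₁-k₂| * M := by
        rw [abs_mul, abs_of_nonneg hg2.1]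
        exact mul_le_mul_of_nonneg_left hg2.2 (abs_nonneg _)
      have := neg_abs_le ((k₁-k₂) * deriv V₂ x)
      nlinarith [abs_nonneg (k₁ - k₂)]
    have hT2 : 0 ≤ (1-γ) * (γ/w) ^ (γ/(1-γ)) * ((max 0 (deriv V₁ x)) ^ (1/(1-γ))
          - (max 0 (deriv V₂ x)) ^ (1/(1-γ))) :=
      mul_nonneg (mul_nonneg h1γ.le hc) (by linarith)
    have hT3 : 0 ≤ k₁ * (deriv V₁ x - deriv V₂ x) := mul_nonneg hk₁ hu
    rw [hg]
    linarith
  have hint_le : ∫ y in ζ..zs, g y ≤ 2 * M * |k₁ - k₂| * (zs - ζ) := by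
    calc ∫ y in ζ..zs, g y ≤ ∫ _y in ζ..zs, 2 * M * |k₁ - k₂| :=
          integral_mono_on hζlt.le hgint intervalIntegrable_const hptw
      _ = 2 * M * |k₁ - k₂| * (zs - ζ) := by
          rw [intervalIntegral.integral_const, smul_eq_mul]; ring
  have hkey : σ^2/2 * (deriv V₁ zs - deriv V₂ zs) ≤ 2 * M * |k₁ - k₂| * zb := by
    have h1 : 2 * M * |k₁ - k₂| * (zs - ζ) ≤ 2 * M * |k₁ - k₂| * zb := by
      apply mul_le_mul_of_nonneg_left _ (by positivity)
      linarith [hzs.2]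
    rw [hFTC, hζu] at hint_le
    linarith
  have heqR : 4 * zb / σ^2 * M * |k₁ - k₂| = (2/σ^2) * (2 * M * |k₁ - k₂| * zb) := by
    field_simp; ring
  rw [heqR]
  have : deriv V₁ zs - deriv V₂ zs = (2/σ^2) * (σ^2/2 * (deriv V₁ zs - deriv V₂ zs)) := by
    field_simp
  rw [this]
  exact mul_le_mul_of_nonneg_left hkey (by positivity)

/-- Lipschitz dependence of the gradient of the HJB solution
on the drift parameter k. -/
theorem stmt_6 (zb σ ρ w B α γ : ℝ)
(hz : 0 < zb) (hσ : 0 < σ) (hρ : 0 < ρ) (hw : 0 < w) (hB : 0 < B)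
    (hα : α ∈ Set.Ioo (0:ℝ) 1) (hγ : γ ∈ Set.Ioo (0:ℝ) 1)
    (k₁ k₂ : ℝ) (hk₁ : 0 ≤ k₁) (hk₂ : 0 ≤ k₂)
    (V₁ V₂ : ℝ → ℝ)
    (hV₁ : DifferentiableOn ℝ V₁ (Set.Icc 0 zb))
    (hV₁' : ContinuousOn (deriv V₁) (Set.Icc 0 zb))
    (hV₁'' : ∀ z ∈ Set.Ioo 0 zb, DifferentiableAt ℝ (deriv V₁) z)
    (hV₁''c : ContinuousOn (deriv (deriv V₁)) (Set.Ioo 0 zb))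
    (hV₂ : DifferentiableOn ℝ V₂ (Set.Icc 0 zb))
    (hV₂' : ContinuousOn (deriv V₂) (Set.Icc 0 zb))
    (hV₂'' : ∀ z ∈ Set.Ioo 0 zb, DifferentiableAt ℝ (deriv V₂) z)
    (hV₂''c : ContinuousOn (deriv (deriv V₂)) (Set.Ioo 0 zb))
    (heq₁ : ∀ z ∈ Set.Ioo 0 zb,
      -(σ^2/2) * deriv (deriv V₁) z + ρ * V₁ z -
        ((1-γ) * (γ/w) ^ (γ/(1-γ)) * (max 0 (deriv V₁ z)) ^ (1/(1-γ))
          + k₁ * deriv V₁ z + z ^ α / B ^ (α-1)) = 0)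
    (heq₂ : ∀ z ∈ Set.Ioo 0 zb,
      -(σ^2/2) * deriv (deriv V₂) z + ρ * V₂ z -
        ((1-γ) * (γ/w) ^ (γ/(1-γ)) * (max 0 (deriv V₂ z)) ^ (1/(1-γ))
          + k₂ * deriv V₂ z + z ^ α / B ^ (α-1)) = 0)
    (hbc₁0 : deriv V₁ 0 = 0) (hbc₁1 : deriv V₁ zb = 0)
    (hbc₂0 : deriv V₂ 0 = 0) (hbc₂1 : deriv V₂ zb = 0)
    (M : ℝ) (hM : M = (zb ^ α / ((1-γ) * B ^ (α-1))) ^ (1-γ) * (w/γ) ^ γ)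
    (hval₁ : ∀ z ∈ Set.Icc 0 zb, 0 ≤ V₁ z ∧ V₁ z ≤ zb ^ α / (ρ * B ^ (α-1)))
    (hval₂ : ∀ z ∈ Set.Icc 0 zb, 0 ≤ V₂ z ∧ V₂ z ≤ zb ^ α / (ρ * B ^ (α-1)))
    (hgrad₁ : ∀ z ∈ Set.Icc 0 zb, 0 ≤ deriv V₁ z ∧ deriv V₁ z ≤ M)
    (hgrad₂ : ∀ z ∈ Set.Icc 0 zb, 0 ≤ deriv V₂ z ∧ deriv V₂ z ≤ M)
    (hdist : ∀ z ∈ Set.Icc 0 zb, |V₁ z - V₂ z| ≤ M / ρ * |k₁ - k₂|) :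
    ∀ z ∈ Set.Icc 0 zb,
      |deriv V₁ z - deriv V₂ z| ≤ 4 * zb / σ^2 * M * |k₁ - k₂| := by
  intro z hzm
  have h0mem : (0:ℝ) ∈ Set.Icc 0 zb := ⟨le_refl 0, hz.le⟩
  have hM0 : 0 ≤ M := le_trans (hgrad₁ 0 h0mem).1 (hgrad₁ 0 h0mem).2
  have h1 := aux_key zb σ ρ w B α γ k₁ k₂ hz hσ hρ hw hγ hk₁ V₁ V₂
    hV₁ hV₁' hV₁'' hV₂ hV₂' hV₂'' heq₁ heq₂
    (by rw [hbc₁0, hbc₂0]; ring) (by rw [hbc₁1, hbc₂1]; ring)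
    M hM0 hgrad₂ hdist z hzm
  have h2 := aux_key zb σ ρ w B α γ k₂ k₁ hz hσ hρ hw hγ hk₂ V₂ V₁
    hV₂ hV₂' hV₂'' hV₁ hV₁' hV₁'' heq₂ heq₁
    (by rw [hbc₁0, hbc₂0]; ring) (by rw [hbc₁1, hbc₂1]; ring)
    M hM0 hgrad₁
    (fun x hx => by rw [abs_sub_comm (V₂ x) (V₁ x), abs_sub_comm k₂ k₁]; exact hdist x hx)
    z hzm
  rw [abs_sub_comm k₂ k₁] at h2
  exact abs_le.mpr ⟨by linarith, h1⟩
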